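/- The node-based relaxed likelihood, defined as L_NR(y) := ∏_{i=1}^N M_i(y), where M_i(y) is the marginal probability under the joint model of the event {y'(j,i) = y(j,i) for every in-edge (j,i) ∈ E_S}, satisfies L_NR(y) = ∏_{i=1}^N Σ_{ℓ=1}^C p_ℓ · ∏_{h=1}^R ( Σ_{m=1}^C p_{h|m,ℓ} · p_m )^{n_i^{(h)}}, where n_i^{(h)} = |{j : (j,i) ∈ E_S and y(j,i) = h}|. Moreover, if every factor Σ_{ℓ=1}^C p_ℓ · ∏_{h=1}^R ( Σ_{m=1}^C p_{h|m,ℓ} · p_m )^{n_i^{(h)}} is strictly positive, then log L_NR(y) = Σ_{i=1}^N g(n_i) with g(n_i) := log( Σ_{ℓ=1}^C p_ℓ · ∏_{h=1}^R ( Σ_{m=1}^C p_{h|m,ℓ} · p_m )^{n_i^{(h)}} ). -/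

import Mathlib

open Finset

/-- The joint probability mass function `P(x,y)` of states `x` and edge scores `y`. -/
noncomputable def jointP {N C R : ℕ} (E : Finset (Fin N × Fin N))
    (p : Fin C → ℝ) (q : Fin R → Fin C → Fin C → ℝ)
    (ω : (Fin N → Fin C) × ({e // e ∈ E} → Fin R)) : ℝ :=
  (∏ i, p (ω.1 i)) * ∏ e : {e // e ∈ E}, q (ω.2 e) (ω.1 e.1.1) (ω.1 e.1.2)

/-- The probability of an event `A`: the sum of `P(x,y)` over the outcomes in `A`. -/
noncomputable def prEvent {N C R : ℕ} (E : Finset (Fin N × Fin N))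
    (p : Fin C → ℝ) (q : Fin R → Fin C → Fin C → ℝ)
    (A : Set ((Fin N → Fin C) × ({e // e ∈ E} → Fin R))) : ℝ :=
  ∑ ω : (Fin N → Fin C) × ({e // e ∈ E} → Fin R), A.indicator (jointP E p q) ω

lemma sum_prod_fun {ι α : Type*} [Fintype ι] [Fintype α] [DecidableEq ι] (f : ι → α → ℝ) :
    ∑ g : ι → α, ∏ i, f i (g i) = ∏ i, ∑ a, f i a := by
  rw [Finset.prod_univ_sum, Fintype.piFinset_univ]

lemma node_eq (N C R : ℕ) (E : Finset (Fin N × Fin N)) (hE : ∀ i : Fin N, (i, i) ∉ E)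
    (p : Fin C → ℝ) (hpsum : ∑ ℓ, p ℓ = 1)
    (q : Fin R → Fin C → Fin C → ℝ) (hqsum : ∀ ℓ m, ∑ h, q h ℓ m = 1)
    (y : Fin N × Fin N → Fin R) (i : Fin N) :
    prEvent E p q {ω | ∀ e : {e // e ∈ E}, e.1.2 = i → ω.2 e = y e.1}
      = ∑ ℓ, p ℓ * ∏ h : Fin R,
          (∑ m, q h m ℓ * p m)
            ^ ((univ.filter (fun j : Fin N => (j, i) ∈ E ∧ y (j, i) = h)).card) := by
  classical
  set T : Finset (Fin N) := univ.filter (fun j => (j, i) ∈ E) with hT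
  set S : Fin R → Fin C → ℝ := fun h ℓ => ∑ m, q h m ℓ * p m with hS
  -- Step 1: integrate out the scores
  have step1 : prEvent E p q {ω | ∀ e : {e // e ∈ E}, e.1.2 = i → ω.2 e = y e.1}
      = ∑ x : Fin N → Fin C, (∏ k, p (x k)) *
          ∏ e : {e // e ∈ E}, (if e.1.2 = i then q (y e.1) (x e.1.1) (x e.1.2) else 1) := by
    unfold prEvent
    rw [Fintype.sum_prod_type]
    refine Finset.sum_congr rfl fun x _ => ?_
    set ge : {e // e ∈ E} → Fin R → ℝ := fun e h =>
      if e.1.2 = i then (if h = y e.1 then q h (x e.1.1) (x e.1.2) else 0)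
      else q h (x e.1.1) (x e.1.2) with hge
    have key : ∀ y' : {e // e ∈ E} → Fin R,
        ({ω : (Fin N → Fin C) × ({e // e ∈ E} → Fin R) |
            ∀ e : {e // e ∈ E}, e.1.2 = i → ω.2 e = y e.1}).indicator
          (jointP E p q) (x, y')
        = (∏ k, p (x k)) * ∏ e : {e // e ∈ E}, ge e (y' e) := by
      intro y'
      rw [Set.indicator_apply]
      simp only [Set.mem_setOf_eq]
      by_cases hmem : ∀ e : {e // e ∈ E}, e.1.2 = i → y' e = y e.1
      · rw [if_pos hmem]
        unfold jointP
        congr 1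
        refine Finset.prod_congr rfl fun e _ => ?_
        by_cases he : e.1.2 = i
        · simp [hge, he, hmem e he]
        · simp [hge, he]
      · rw [if_neg hmem]
        push_neg at hmem
        obtain ⟨e, he, hne⟩ := hmem
        have : ge e (y' e) = 0 := by simp [hge, he, hne]
        rw [Finset.prod_eq_zero (Finset.mem_univ e) this, mul_zero]
    simp only [key]
    rw [← Finset.mul_sum, sum_prod_fun]
    congr 1
    refine Finset.prod_congr rfl fun e _ => ?_
    by_cases he : e.1.2 = i
    · simp [hge, he]
    · simp [hge, he, hqsum]
  rw [step1]
  -- Step 2: product over edges into i becomes product over in-neighbors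
  have step2 : ∀ x : Fin N → Fin C,
      (∏ e : {e // e ∈ E}, (if e.1.2 = i then q (y e.1) (x e.1.1) (x e.1.2) else 1))
        = ∏ j ∈ T, q (y (j, i)) (x j) (x i) := by
    intro x
    rw [show (∏ e : {e // e ∈ E}, (if e.1.2 = i then q (y e.1) (x e.1.1) (x e.1.2) else 1))
        = ∏ e ∈ E, (if e.2 = i then q (y e) (x e.1) (x e.2) else 1) from
        Finset.prod_coe_sort E (fun e => if e.2 = i then q (y e) (x e.1) (x e.2) else 1)]
    rw [← Finset.prod_filter]
    refine Finset.prod_nbij' (fun e => e.1) (fun j => (j, i)) ?_ ?_ ?_ ?_ ?_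
    · intro e he
      simp only [Finset.mem_filter, Finset.mem_univ, true_and] at he ⊢
      obtain ⟨h1, h2⟩ := he
      rw [hT]; simp only [Finset.mem_filter, Finset.mem_univ, true_and]
      have : (e.1, i) = e := by rw [← h2]
      rw [this]; exact h1
    · intro j hj
      rw [hT] at hj
      simp only [Finset.mem_filter, Finset.mem_univ, true_and] at hj ⊢
      simpa using hj
    · intro e he
      simp only [Finset.mem_filter] at he
      exact Prod.ext rfl he.2.symm
    · intro j hj; rfl
    · intro e he
      simp only [Finset.mem_filter] at he
      rw [he.2, show ((fun e : Fin N × Fin N => e.1) e, i) = e from Prod.ext rfl he.2.symm]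
  simp only [step2]
  -- Step 3: the ℓ-decomposition and per-node factorization
  set g : Fin C → Fin N → Fin C → ℝ := fun ℓ k a =>
    (if k = i then (if a = ℓ then (1:ℝ) else 0) else 1) *
      (p a * (if (k, i) ∈ E then q (y (k, i)) a ℓ else 1)) with hg
  have claim1 : ∀ x : Fin N → Fin C,
      (∏ k, p (x k)) * ∏ j ∈ T, q (y (j, i)) (x j) (x i)
        = ∑ ℓ, ∏ k, g ℓ k (x k) := by
    intro x
    rw [Finset.sum_eq_single (x i)]
    · rw [show (∏ j ∈ T, q (y (j, i)) (x j) (x i))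
          = ∏ k, (if (k, i) ∈ E then q (y (k, i)) (x k) (x i) else 1) by
        rw [← Finset.prod_filter]]
      rw [← Finset.prod_mul_distrib]
      refine Finset.prod_congr rfl fun k _ => ?_
      by_cases hk : k = i <;> simp [hg, hk]
    · intro ℓ _ hℓ
      refine Finset.prod_eq_zero (Finset.mem_univ i) ?_
      simp [hg, Ne.symm hℓ]
    · intro h; exact absurd (Finset.mem_univ (x i)) h
  simp only [claim1]
  rw [Finset.sum_comm]
  refine Finset.sum_congr rfl fun ℓ _ => ?_
  rw [sum_prod_fun]
  -- Step 4: compute the per-node sums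
  have hsum : ∀ k, (∑ a, g ℓ k a)
      = if k = i then p ℓ else (if (k, i) ∈ E then S (y (k, i)) ℓ else 1) := by
    intro k
    by_cases hk : k = i
    · subst hk
      simp [hg, hE k, Finset.sum_ite_eq' Finset.univ ℓ p]
    · by_cases hke : (k, i) ∈ E
      · simp only [hg, hS, if_neg hk, if_pos hke, one_mul]
        exact Finset.sum_congr rfl fun a _ => mul_comm _ _
      · simp [hg, hk, hke, hpsum]
  simp only [hsum]
  rw [← Finset.mul_prod_erase Finset.univ _ (Finset.mem_univ i), if_pos rfl]
  congr 1
  have herase : (∏ k ∈ Finset.univ.erase i,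
      (if k = i then p ℓ else (if (k, i) ∈ E then S (y (k, i)) ℓ else 1)))
      = ∏ k, (if (k, i) ∈ E then S (y (k, i)) ℓ else 1) := by
    rw [show (∏ k ∈ Finset.univ.erase i,
        (if k = i then p ℓ else (if (k, i) ∈ E then S (y (k, i)) ℓ else 1)))
        = ∏ k ∈ Finset.univ.erase i, (if (k, i) ∈ E then S (y (k, i)) ℓ else 1) from
      Finset.prod_congr rfl fun k hk => by
        rw [if_neg (Finset.mem_erase.mp hk).1]]
    exact Finset.prod_erase _ (by simp [hE i])
  rw [herase, ← Finset.prod_filter, ← hT]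
  -- Step 5: group by score value
  have hfib : (∏ h : Fin R, (S h ℓ) ^ ((T.filter (fun j => y (j, i) = h)).card))
      = ∏ j ∈ T, S (y (j, i)) ℓ := by
    rw [← Finset.prod_fiberwise_of_maps_to (g := fun j => y (j, i)) (t := Finset.univ)
      (fun j _ => Finset.mem_univ _) (fun j => S (y (j, i)) ℓ)]
    refine Finset.prod_congr rfl fun h _ => ?_
    rw [Finset.prod_congr rfl (fun j hj => by
      rw [(Finset.mem_filter.mp hj).2] : ∀ j ∈ T.filter (fun j => y (j, i) = h),
        S (y (j, i)) ℓ = S h ℓ), Finset.prod_const]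
  rw [← hfib]
  refine Finset.prod_congr rfl fun h _ => ?_
  congr 2
  rw [hT, Finset.filter_filter]


theorem stmt_9 (N C R : ℕ) (hN : 1 ≤ N) (hC : 1 ≤ C) (hR : 1 ≤ R)
    (E : Finset (Fin N × Fin N)) (hE : ∀ i : Fin N, (i, i) ∉ E)
    (p : Fin C → ℝ) (hp : ∀ ℓ, 0 ≤ p ℓ) (hpsum : ∑ ℓ, p ℓ = 1)
    (q : Fin R → Fin C → Fin C → ℝ) (hq : ∀ h ℓ m, 0 ≤ q h ℓ m)
    (hqsum : ∀ ℓ m, ∑ h, q h ℓ m = 1)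
    (y : Fin N × Fin N → Fin R) :
    (∏ i : Fin N,
        prEvent E p q {ω | ∀ e : {e // e ∈ E}, e.1.2 = i → ω.2 e = y e.1})
      = (∏ i : Fin N, ∑ ℓ, p ℓ * ∏ h : Fin R,
          (∑ m, q h m ℓ * p m)
            ^ ((univ.filter (fun j : Fin N => (j, i) ∈ E ∧ y (j, i) = h)).card))
    ∧ ((∀ i : Fin N,
          0 < ∑ ℓ, p ℓ * ∏ h : Fin R,
            (∑ m, q h m ℓ * p m)
              ^ ((univ.filter (fun j : Fin N => (j, i) ∈ E ∧ y (j, i) = h)).card)) →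
        Real.log (∏ i : Fin N,
            prEvent E p q {ω | ∀ e : {e // e ∈ E}, e.1.2 = i → ω.2 e = y e.1})
          = ∑ i : Fin N, Real.log (∑ ℓ, p ℓ * ∏ h : Fin R,
              (∑ m, q h m ℓ * p m)
                ^ ((univ.filter (fun j : Fin N => (j, i) ∈ E ∧ y (j, i) = h)).card))) := by
  have hprod : (∏ i : Fin N,
        prEvent E p q {ω | ∀ e : {e // e ∈ E}, e.1.2 = i → ω.2 e = y e.1})
      = ∏ i : Fin N, ∑ ℓ, p ℓ * ∏ h : Fin R, (∑ m, q h m ℓ * p m)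
          ^ ((univ.filter (fun j : Fin N => (j, i) ∈ E ∧ y (j, i) = h)).card) :=
    Finset.prod_congr rfl (fun i _ => node_eq N C R E hE p hpsum q hqsum y i)
  refine ⟨hprod, fun hpos => ?_⟩
  rw [hprod, Real.log_prod (fun i _ => ne_of_gt (hpos i))]
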